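/- Under the self-supervised model, condition on Y = +1 so that (Z − k₂)/(k₁σ₁²) ∼ χ²_d. If the threshold satisfies b ≥ dk₁(β+1)σ₁²/2 + k₂ − δ·dk₁(β+1)σ₁²/2 with δ ∈ (0, (β−1)/(β+1)), then: if δ ∈ [(β−3)/(β+1), (β−1)/(β+1)), P(Z > b | Y=+1) ≤ exp(−d(β−1−δ(β+1))²/32); and if δ ∈ (0, (β−3)/(β+1)), P(Z > b | Y=+1) ≤ exp(−d(β−1−δ(β+1))/16). -/

import Mathlib

open MeasureTheory ProbabilityTheory Real

set_option maxHeartbeats 1000000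

section Aux

lemma pdf_mul_aux (s : ℝ) :
    (fun x => gaussianPDFReal 0 1 x * rexp (s * x ^ 2))
      = fun x => (Real.sqrt (2 * π))⁻¹ * rexp (-(1/2 - s) * x ^ 2) := by
  funext x
  unfold gaussianPDFReal
  simp only [NNReal.coe_one, mul_one, sub_zero]
  rw [mul_assoc, ← Real.exp_add]
  ring_nf

lemma gauss_int_aux1 {s : ℝ} (hs : s < 1/2) :
    Integrable (fun x => gaussianPDFReal 0 1 x * rexp (s * x ^ 2)) volume := by
  have hc : 0 < 1/2 - s := by linarith
  rw [pdf_mul_aux]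
  exact (integrable_exp_neg_mul_sq hc).const_mul _

lemma gauss_int_aux2 {s : ℝ} (hs : s < 1/2) :
    ∫ x, gaussianPDFReal 0 1 x * rexp (s * x ^ 2) = (Real.sqrt (1 - 2*s))⁻¹ := by
  have hc : 0 < 1/2 - s := by linarith
  have h2 : (0:ℝ) < 1 - 2*s := by linarith
  rw [pdf_mul_aux, integral_const_mul, integral_gaussian]
  rw [show π / (1/2 - s) = (2*π) / (1-2*s) by field_simp]
  rw [Real.sqrt_div (by positivity)]
  have h3 : Real.sqrt (2*π) ≠ 0 := by positivity
  field_simp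

lemma gauss_lintegral {s : ℝ} (hs : s < 1/2) :
    ∫⁻ x, ENNReal.ofReal (rexp (s * x ^ 2)) ∂(gaussianReal 0 1)
      = ENNReal.ofReal ((Real.sqrt (1 - 2*s))⁻¹) := by
  rw [gaussianReal_of_var_ne_zero 0 one_ne_zero,
    lintegral_withDensity_eq_lintegral_mul _ (measurable_gaussianPDF 0 1)
      (by fun_prop)]
  have : ∀ x : ℝ, (gaussianPDF 0 1 x * ENNReal.ofReal (rexp (s * x ^ 2)))
      = ENNReal.ofReal (gaussianPDFReal 0 1 x * rexp (s * x ^ 2)) := by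
    intro x
    rw [gaussianPDF, ← ENNReal.ofReal_mul (gaussianPDFReal_nonneg 0 1 x)]
  simp only [Pi.mul_apply, this]
  rw [← ofReal_integral_eq_lintegral_ofReal (gauss_int_aux1 hs)
    (ae_of_all _ fun x => mul_nonneg (gaussianPDFReal_nonneg 0 1 x) (Real.exp_nonneg _))]
  rw [gauss_int_aux2 hs]

lemma gauss_integrable {s : ℝ} (hs : s < 1/2) :
    Integrable (fun x => rexp (s * x ^ 2)) (gaussianReal 0 1) := by
  constructor
  · exact (Real.continuous_exp.comp (by continuity)).aestronglyMeasurable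
  · rw [hasFiniteIntegral_iff_ofReal (ae_of_all _ fun x => (Real.exp_nonneg _))]
    rw [gauss_lintegral hs]
    exact ENNReal.ofReal_lt_top

lemma gauss_integral {s : ℝ} (hs : s < 1/2) :
    ∫ x, rexp (s * x ^ 2) ∂(gaussianReal 0 1) = (Real.sqrt (1 - 2*s))⁻¹ := by
  rw [integral_eq_lintegral_of_nonneg_ae (ae_of_all _ fun x => Real.exp_nonneg _)
    (Real.continuous_exp.comp (by continuity)).aestronglyMeasurable]
  rw [gauss_lintegral hs, ENNReal.toReal_ofReal (by positivity)]

lemma pi_exp (s : ℝ) (hs : s < 1/2) (n : ℕ) :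
    Integrable (fun w : Fin n → ℝ => rexp (s * ∑ i, w i ^ 2))
        (Measure.pi fun _ => gaussianReal 0 1) ∧
    ∫ w : Fin n → ℝ, rexp (s * ∑ i, w i ^ 2) ∂(Measure.pi fun _ => gaussianReal 0 1)
      = ((Real.sqrt (1 - 2*s))⁻¹) ^ n := by
  induction n with
  | zero =>
      simp only [Finset.univ_eq_empty, Finset.sum_empty, mul_zero, Real.exp_zero, pow_zero]
      constructor
      · exact integrable_const 1
      · simp
  | succ n ih =>
      have hmp := (measurePreserving_piFinSuccAbove (fun _ : Fin (n+1) => gaussianReal 0 1) 0).symm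
      have hemb := (MeasurableEquiv.piFinSuccAbove (fun _ : Fin (n+1) => ℝ) 0).symm.measurableEmbedding
      have hcomp : ∀ p : ℝ × (Fin n → ℝ),
          rexp (s * ∑ i, ((MeasurableEquiv.piFinSuccAbove (fun _ : Fin (n+1) => ℝ) 0).symm p) i ^ 2)
            = rexp (s * p.1 ^ 2) * rexp (s * ∑ i, p.2 i ^ 2) := by
        intro p
        rw [← Real.exp_add, ← mul_add]
        congr 2
        rw [MeasurableEquiv.piFinSuccAbove_symm_apply]
        simp [Fin.insertNthEquiv, Fin.insertNth_zero, Fin.sum_univ_succ]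
      constructor
      · rw [← hmp.map_eq, hemb.integrable_map_iff]
        have : ((fun w : Fin (n+1) → ℝ => rexp (s * ∑ i, w i ^ 2)) ∘
            (MeasurableEquiv.piFinSuccAbove (fun _ : Fin (n+1) => ℝ) 0).symm)
            = fun p : ℝ × (Fin n → ℝ) => rexp (s * p.1 ^ 2) * rexp (s * ∑ i, p.2 i ^ 2) :=
          funext hcomp
        rw [this]
        exact Integrable.mul_prod (gauss_integrable hs) ih.1
      · rw [← hmp.map_eq, hemb.integral_map]
        calc ∫ p : ℝ × (Fin n → ℝ), rexp (s * ∑ i, ((MeasurableEquiv.piFinSuccAbove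
                (fun _ : Fin (n+1) => ℝ) 0).symm p) i ^ 2)
              ∂((gaussianReal 0 1).prod (Measure.pi fun _ : Fin n => gaussianReal 0 1))
            = ∫ p : ℝ × (Fin n → ℝ), rexp (s * p.1 ^ 2) * rexp (s * ∑ i, p.2 i ^ 2)
              ∂((gaussianReal 0 1).prod (Measure.pi fun _ : Fin n => gaussianReal 0 1)) := by
              exact integral_congr_ae (ae_of_all _ hcomp)
          _ = (∫ x, rexp (s * x ^ 2) ∂(gaussianReal 0 1)) *
              ∫ w : Fin n → ℝ, rexp (s * ∑ i, w i ^ 2)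
                ∂(Measure.pi fun _ : Fin n => gaussianReal 0 1) :=
              integral_prod_mul (fun x : ℝ => rexp (s * x ^ 2))
                (fun w : Fin n → ℝ => rexp (s * ∑ i, w i ^ 2))
          _ = ((Real.sqrt (1 - 2*s))⁻¹) ^ (n+1) := by
              rw [gauss_integral hs, ih.2, pow_succ]
              ring

lemma deriv_log_aux (x : ℝ) (hx : -1 < x) :
    HasDerivAt (fun t : ℝ => t - Real.log (1 + t)) (1 - (1 + x)⁻¹) x := by
  have h1 : HasDerivAt (fun t : ℝ => 1 + t) 1 x := by
    simpa using (hasDerivAt_id x).const_add 1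
  have h2 : HasDerivAt (fun t : ℝ => Real.log (1 + t)) ((1 + x)⁻¹ * 1) x :=
    (Real.hasDerivAt_log (by linarith)).comp x h1
  have h3 : HasDerivAt (fun t : ℝ => t - Real.log (1 + t)) (1 - (1 + x)⁻¹ * 1) x :=
    (hasDerivAt_id' x).sub h2
  simpa using h3

lemma log_key1 {t : ℝ} (ht : 0 < t) (ht1 : t ≤ 1) : t ^ 2 / 4 ≤ t - Real.log (1 + t) := by
  set g : ℝ → ℝ := fun t => t - Real.log (1 + t) - t ^ 2 / 4 with hg
  have hderiv : ∀ x : ℝ, -1 < x → HasDerivAt g (1 - (1 + x)⁻¹ - x / 2) x := by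
    intro x hx
    have h : HasDerivAt g _ x := (deriv_log_aux x hx).sub ((hasDerivAt_pow 2 x).div_const 4)
    convert h using 1
    norm_num
    ring
  have hmono : MonotoneOn g (Set.Icc 0 1) := by
    apply monotoneOn_of_deriv_nonneg (convex_Icc 0 1)
    · intro x hx
      exact (hderiv x (by simp only [Set.mem_Icc] at hx; linarith [hx.1])).continuousAt.continuousWithinAt
    · intro x hx
      rw [interior_Icc] at hx
      exact (hderiv x (by linarith [hx.1])).differentiableAt.differentiableWithinAt
    · intro x hx
      rw [interior_Icc] at hx
      rw [(hderiv x (by linarith [hx.1])).deriv]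
      have h1x : (0:ℝ) < 1 + x := by linarith [hx.1]
      have key : 1 - (1 + x)⁻¹ - x / 2 = x * (1 - x) / (2 * (1 + x)) := by
        field_simp
        ring
      rw [key]
      apply div_nonneg <;> nlinarith [hx.1, hx.2]
  have h0 : g 0 = 0 := by simp [hg]
  have := hmono (Set.mem_Icc.2 ⟨le_refl 0, zero_le_one⟩) (Set.mem_Icc.2 ⟨ht.le, ht1⟩) ht.le
  rw [h0] at this
  simp only [hg] at this
  linarith

lemma log_key2 {t : ℝ} (ht : 1 < t) : t / 4 ≤ t - Real.log (1 + t) := by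
  set g : ℝ → ℝ := fun t => t - Real.log (1 + t) - t / 4 with hg
  have hderiv : ∀ x : ℝ, -1 < x → HasDerivAt g (1 - (1 + x)⁻¹ - 1 / 4) x := by
    intro x hx
    have h : HasDerivAt g _ x := (deriv_log_aux x hx).sub ((hasDerivAt_id x).div_const 4)
    convert h using 1
  have hmono : MonotoneOn g (Set.Icc 1 t) := by
    apply monotoneOn_of_deriv_nonneg (convex_Icc 1 t)
    · intro x hx
      exact (hderiv x (by simp only [Set.mem_Icc] at hx; linarith [hx.1])).continuousAt.continuousWithinAt
    · intro x hx
      rw [interior_Icc] at hx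
      exact (hderiv x (by linarith [hx.1])).differentiableAt.differentiableWithinAt
    · intro x hx
      rw [interior_Icc] at hx
      rw [(hderiv x (by linarith [hx.1])).deriv]
      have h1x : (0:ℝ) < 1 + x := by linarith [hx.1]
      have h2x : (2:ℝ) ≤ 1 + x := by linarith [hx.1]
      have : (1 + x)⁻¹ ≤ 1 / 2 := by
        have := inv_anti₀ (by norm_num : (0:ℝ) < 2) h2x
        norm_num at this ⊢
        linarith
      linarith
  have h1 : (0:ℝ) ≤ g 1 := by
    simp only [hg]
    norm_num
    have := Real.log_two_lt_d9
    linarith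
  have := hmono (Set.mem_Icc.2 ⟨le_refl 1, ht.le⟩) (Set.mem_Icc.2 ⟨ht.le, le_refl t⟩) ht.le
  simp only [hg] at this h1
  linarith

end Aux

/-- The chi-squared distribution with `d` degrees of freedom, realized as the law of the
sum of `d` squared i.i.d. standard normals. -/
noncomputable def chiSq (d : ℕ) : Measure ℝ :=
  Measure.map (fun w : Fin d → ℝ => ∑ i, (w i) ^ 2)
    (Measure.pi fun _ : Fin d => gaussianReal 0 1)

lemma chiSq_meas (d : ℕ) : Measurable (fun w : Fin d → ℝ => ∑ i, (w i) ^ 2) := by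
  fun_prop

instance chiSq_prob (d : ℕ) : IsProbabilityMeasure (chiSq d) :=
  Measure.isProbabilityMeasure_map (chiSq_meas d).aemeasurable

lemma chiSq_chernoff (d : ℕ) {s : ℝ} (hs0 : 0 ≤ s) (hs : s < 1/2) (a : ℝ) :
    ((chiSq d) {x | a ≤ x}).toReal ≤ rexp (-s * a) * ((Real.sqrt (1 - 2*s))⁻¹) ^ d := by
  have hexp : ∀ m : Measure ℝ, AEStronglyMeasurable (fun x : ℝ => rexp (s * x)) m :=
    fun m => Continuous.aestronglyMeasurable (by continuity)
  have hint : Integrable (fun x => rexp (s * x)) (chiSq d) := by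
    rw [chiSq, integrable_map_measure (hexp _) (chiSq_meas d).aemeasurable]
    exact (pi_exp s hs d).1
  have hmgf : mgf id (chiSq d) s = ((Real.sqrt (1 - 2*s))⁻¹) ^ d := by
    rw [mgf]
    simp only [id_eq]
    rw [chiSq, integral_map (chiSq_meas d).aemeasurable (hexp _)]
    exact (pi_exp s hs d).2
  have := measure_ge_le_exp_mul_mgf (X := id) (μ := chiSq d) a hs0 hint
  simpa [hmgf, measureReal_def] using this

lemma chiSq_tail (d : ℕ) {t : ℝ} (ht : 0 < t) :
    ((chiSq d) {x | (d:ℝ) * (1 + t) ≤ x}).toReal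
      ≤ rexp (-(d:ℝ) / 2 * (t - Real.log (1 + t))) := by
  have h1t : (0:ℝ) < 1 + t := by linarith
  set s : ℝ := t / (2 * (1 + t)) with hsdef
  have hs0 : 0 ≤ s := by positivity
  have hs : s < 1/2 := by
    rw [hsdef, div_lt_iff₀ (by positivity)]
    linarith
  have h12s : 1 - 2*s = (1+t)⁻¹ := by
    rw [hsdef]
    field_simp
    ring
  have hsq : (Real.sqrt (1 - 2*s))⁻¹ = Real.sqrt (1+t) := by
    rw [h12s, Real.sqrt_inv, inv_inv]
  have hpow : (Real.sqrt (1+t)) ^ d = rexp ((d:ℝ) * (Real.log (1+t) / 2)) := by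
    rw [← Real.log_sqrt h1t.le, Real.exp_nat_mul, Real.exp_log (Real.sqrt_pos.2 h1t)]
  calc ((chiSq d) {x | (d:ℝ) * (1 + t) ≤ x}).toReal
      ≤ rexp (-s * ((d:ℝ) * (1 + t))) * ((Real.sqrt (1 - 2*s))⁻¹) ^ d :=
        chiSq_chernoff d hs0 hs _
    _ = rexp (-(d:ℝ) / 2 * (t - Real.log (1 + t))) := by
        rw [hsq, hpow, ← Real.exp_add]
        congr 1
        rw [hsdef]
        field_simp
        ring

theorem positive_class_error_bound
    {Ω : Type*} [MeasureSpace Ω] [IsProbabilityMeasure (ℙ : Measure Ω)]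
    (d : ℕ) (hd : 1 ≤ d) (k₁ k₂ σ₁ β δ b : ℝ)
    (hk₁ : 0 < k₁) (hk₂ : 0 < k₂) (hσ : 0 < σ₁) (hβ : 3 < β)
    (hδ : 0 < δ) (hδ' : δ < (β - 1) / (β + 1))
    (Z : Ω → ℝ)
    (hZ : Measure.map (fun ω => (Z ω - k₂) / (k₁ * σ₁ ^ 2)) ℙ = chiSq d)
    (hb : d * k₁ * (β + 1) * σ₁ ^ 2 / 2 + k₂ - δ * (d * k₁ * (β + 1) * σ₁ ^ 2) / 2 ≤ b) :
    ((β - 3) / (β + 1) ≤ δ →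
      (ℙ {ω | Z ω > b}).toReal ≤ Real.exp (-d * (β - 1 - δ * (β + 1)) ^ 2 / 32))
    ∧ (δ < (β - 3) / (β + 1) →
      (ℙ {ω | Z ω > b}).toReal ≤ Real.exp (-d * (β - 1 - δ * (β + 1)) / 16)) := by
  have hβ1 : (0:ℝ) < β + 1 := by linarith
  have hc : (0:ℝ) < k₁ * σ₁ ^ 2 := by positivity
  set t : ℝ := (β - 1 - δ * (β + 1)) / 2 with htdef
  have hδβ : δ * (β + 1) < β - 1 := by
    have := (lt_div_iff₀ hβ1).mp hδ'
    linarith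
  have ht : 0 < t := by rw [htdef]; linarith
  have h2t : β - 1 - δ * (β + 1) = 2 * t := by rw [htdef]; ring
  have hφae : AEMeasurable (fun ω => (Z ω - k₂) / (k₁ * σ₁ ^ 2)) ℙ := by
    by_contra h
    rw [Measure.map_of_not_aemeasurable h] at hZ
    have h1 := (chiSq_prob d).measure_univ
    rw [← hZ] at h1
    simp at h1
  have hset : {ω | Z ω > b}
      = (fun ω => (Z ω - k₂) / (k₁ * σ₁ ^ 2)) ⁻¹' {x | (b - k₂) / (k₁ * σ₁ ^ 2) < x} := by
    ext ω
    simp only [Set.mem_setOf_eq, Set.mem_preimage, gt_iff_lt]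
    rw [div_lt_div_iff_of_pos_right hc]
    constructor <;> intro h <;> linarith
  have hmap : ℙ {ω | Z ω > b} = chiSq d {x | (b - k₂) / (k₁ * σ₁ ^ 2) < x} := by
    have h := Measure.map_apply_of_aemeasurable hφae
      (measurableSet_Ioi (a := (b - k₂) / (k₁ * σ₁ ^ 2)))
    rw [hZ] at h
    rw [hset]
    exact h.symm
  have ha : (d:ℝ) * (1 + t) ≤ (b - k₂) / (k₁ * σ₁ ^ 2) := by
    rw [le_div_iff₀ hc]
    have heq : (d:ℝ) * (1 + t) * (k₁ * σ₁ ^ 2)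
        = d * k₁ * (β + 1) * σ₁ ^ 2 / 2 - δ * (d * k₁ * (β + 1) * σ₁ ^ 2) / 2 := by
      rw [htdef]; ring
    linarith
  have hsub : {x : ℝ | (b - k₂) / (k₁ * σ₁ ^ 2) < x} ⊆ {x : ℝ | (d:ℝ) * (1 + t) ≤ x} :=
    fun x hx => le_of_lt (lt_of_le_of_lt ha hx)
  have hbase : (ℙ {ω | Z ω > b}).toReal ≤ rexp (-(d:ℝ) / 2 * (t - Real.log (1 + t))) := by
    calc (ℙ {ω | Z ω > b}).toReal
        = (chiSq d {x | (b - k₂) / (k₁ * σ₁ ^ 2) < x}).toReal := by rw [hmap]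
      _ ≤ (chiSq d {x | (d:ℝ) * (1 + t) ≤ x}).toReal :=
          ENNReal.toReal_mono (measure_ne_top _ _) (measure_mono hsub)
      _ ≤ rexp (-(d:ℝ) / 2 * (t - Real.log (1 + t))) := chiSq_tail d ht
  have hd0 : (0:ℝ) ≤ (d:ℝ) := Nat.cast_nonneg d
  constructor
  · intro hcase
    have ht1 : t ≤ 1 := by
      have := (div_le_iff₀ hβ1).mp hcase
      rw [htdef]
      linarith
    refine hbase.trans (Real.exp_le_exp.mpr ?_)
    have hk := log_key1 ht ht1
    rw [h2t]
    nlinarith [mul_le_mul_of_nonneg_left hk (by positivity : (0:ℝ) ≤ (d:ℝ)/2)]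
  · intro hcase
    have ht1 : 1 < t := by
      have := (lt_div_iff₀ hβ1).mp hcase
      rw [htdef]
      linarith
    refine hbase.trans (Real.exp_le_exp.mpr ?_)
    have hk := log_key2 ht1
    rw [h2t]
    nlinarith [mul_le_mul_of_nonneg_left hk (by positivity : (0:ℝ) ≤ (d:ℝ)/2)]
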